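/- Leibniz-type formula for compositions of Demazure operators: for a reduced expression w = s_{i_1} s_{i_2} ··· s_{i_l} in the symmetric group and polynomials f, g, one has Δ_{i_1} Δ_{i_2} ··· Δ_{i_l}(fg) = ∑ A_{i_1} A_{i_2} ··· A_{i_l}(f) · B_{i_1} B_{i_2} ··· B_{i_l}(g), where the sum runs over all 2^l choices in which, for each j, either (A_{i_j}, B_{i_j}) = (Δ_{i_j}, id) or (A_{i_j}, B_{i_j}) = (s_{i_j}, Δ_{i_j}). -/

import Mathlib

open MvPolynomial

private lemma demazure_X_sub_ne_zero {K : Type*} [Field K] {m : ℕ} (i : Fin m) :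
    (X i.castSucc - X i.succ : MvPolynomial (Fin (m + 1)) K) ≠ 0 := by
  refine sub_ne_zero.mpr fun h => ?_
  exact (Fin.castSucc_lt_succ (i := i)).ne (MvPolynomial.X_injective h)

private lemma demazure_D_add {K : Type*} [Field K] {m : ℕ}
    (D : Fin m → MvPolynomial (Fin (m + 1)) K → MvPolynomial (Fin (m + 1)) K)
    (hD : ∀ (i : Fin m) (f : MvPolynomial (Fin (m + 1)) K),
      (X i.castSucc - X i.succ) * D i f
        = f - rename (Equiv.swap i.castSucc i.succ) f)
    (i : Fin m) (p q : MvPolynomial (Fin (m + 1)) K) :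
    D i (p + q) = D i p + D i q := by
  apply mul_left_cancel₀ (demazure_X_sub_ne_zero i)
  rw [hD, map_add, mul_add, hD, hD]
  ring

private lemma demazure_D_mul {K : Type*} [Field K] {m : ℕ}
    (D : Fin m → MvPolynomial (Fin (m + 1)) K → MvPolynomial (Fin (m + 1)) K)
    (hD : ∀ (i : Fin m) (f : MvPolynomial (Fin (m + 1)) K),
      (X i.castSucc - X i.succ) * D i f
        = f - rename (Equiv.swap i.castSucc i.succ) f)
    (i : Fin m) (p q : MvPolynomial (Fin (m + 1)) K) :
    D i (p * q) = D i p * q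
      + rename (Equiv.swap i.castSucc i.succ) p * D i q := by
  apply mul_left_cancel₀ (demazure_X_sub_ne_zero i)
  rw [hD, map_mul]
  linear_combination (-q) * hD i p - (rename (Equiv.swap i.castSucc i.succ) p) * hD i q

private lemma demazure_D_zero {K : Type*} [Field K] {m : ℕ}
    (D : Fin m → MvPolynomial (Fin (m + 1)) K → MvPolynomial (Fin (m + 1)) K)
    (hD : ∀ (i : Fin m) (f : MvPolynomial (Fin (m + 1)) K),
      (X i.castSucc - X i.succ) * D i f
        = f - rename (Equiv.swap i.castSucc i.succ) f)
    (i : Fin m) : D i 0 = 0 := by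
  apply mul_left_cancel₀ (demazure_X_sub_ne_zero i)
  rw [hD]; simp

private lemma demazure_D_sum {K : Type*} [Field K] {m : ℕ}
    (D : Fin m → MvPolynomial (Fin (m + 1)) K → MvPolynomial (Fin (m + 1)) K)
    (hD : ∀ (i : Fin m) (f : MvPolynomial (Fin (m + 1)) K),
      (X i.castSucc - X i.succ) * D i f
        = f - rename (Equiv.swap i.castSucc i.succ) f)
    (i : Fin m) {α : Type*} (s : Finset α) (F : α → MvPolynomial (Fin (m + 1)) K) :
    D i (∑ a ∈ s, F a) = ∑ a ∈ s, D i (F a) :=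
  map_sum (AddMonoidHom.mk' (D i) (demazure_D_add D hD i)) F s

/-- Leibniz-type formula for compositions of Demazure operators: for a word
`s_{i₁} s_{i₂} ⋯ s_{i_l}` (encoded by the list `L = [i₁,…,i_l]`) and
polynomials `f, g`,
`Δ_{i₁} ⋯ Δ_{i_l}(fg) = ∑ A_{i₁} ⋯ A_{i_l}(f) · B_{i₁} ⋯ B_{i_l}(g)`,
where the sum runs over all `2^l` choices `ε` in which, for each position `t`,
either `(A,B) = (Δ, id)` (when `ε t = true`) or `(A,B) = (s, Δ)`
(when `ε t = false`). -/
theorem demazure_composition_leibniz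
    (K : Type*) [Field K] [CharZero K] (m : ℕ)
    (D : Fin m → MvPolynomial (Fin (m + 1)) K → MvPolynomial (Fin (m + 1)) K)
    (hD : ∀ (i : Fin m) (f : MvPolynomial (Fin (m + 1)) K),
      (X i.castSucc - X i.succ) * D i f
        = f - rename (Equiv.swap i.castSucc i.succ) f)
    (L : List (Fin m)) (f g : MvPolynomial (Fin (m + 1)) K) :
    L.foldr (fun i acc => D i acc) (f * g)
      = ∑ ε : Fin L.length → Bool,
          ((List.finRange L.length).foldr
            (fun t acc => if ε t then D (L.get t) acc
              else rename (Equiv.swap (L.get t).castSucc (L.get t).succ) acc) f)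
          * ((List.finRange L.length).foldr
            (fun t acc => if ε t then acc else D (L.get t) acc) g) := by
  induction L with
  | nil => simp
  | cons i L ih =>
    rw [List.foldr_cons, ih, demazure_D_sum D hD]
    simp only [List.length_cons]
    rw [← Equiv.sum_comp (Fin.consEquiv fun _ : Fin (L.length + 1) => Bool),
      Fintype.sum_prod_type, Fintype.sum_bool]
    simp only [Fin.consEquiv_apply, List.length_cons, List.finRange_succ,
      List.foldr_cons, List.foldr_map, Fin.cons_zero, Fin.cons_succ,
      List.get_cons_zero, List.get_cons_succ, if_true, if_false,
      Bool.cond_eq_if]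
    rw [← Finset.sum_add_distrib]
    refine Finset.sum_congr rfl fun ε _ => ?_
    rw [demazure_D_mul D hD]
    simp
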